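/- arXiv:1001.3258 — 2 statements merged into one kernel-verified Lean document; each statement's English description precedes it below -/
import Mathlib

section
/- Let A be a real M×N matrix, Ã = [[0, A],[Aᵀ, 0]], and let E be a subspace of ℝ^{M+N}. Let (σ, u, v) be a singular triplet of A with z = (1/√2)(uᵀ, vᵀ)ᵀ, and suppose sin∠(z, E) = ε < 1. Then there exists a unit vector w ∈ E with ‖Ã w − σ w‖ ≤ (ε/√(1−ε²)) (σ + ‖A‖), where ‖A‖ is the spectral norm. -/
open Matrix

lemma sqrt_dot_eq_norm {ι : Type*} [Fintype ι] (x : ι → ℝ) :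
    Real.sqrt (x ⬝ᵥ x) = ‖(WithLp.equiv 2 (ι → ℝ)).symm x‖ := by
  rw [EuclideanSpace.norm_eq]
  congr 1
  simp [dotProduct, sq, Real.norm_eq_abs, abs_mul_abs_self]

lemma sqrt_dot_nonneg' {ι : Type*} [Fintype ι] (x : ι → ℝ) : 0 ≤ x ⬝ᵥ x :=
  Finset.sum_nonneg fun i _ => mul_self_nonneg (x i)

lemma sqrt_dot_triangle {ι : Type*} [Fintype ι] (a b : ι → ℝ) :
    Real.sqrt ((a + b) ⬝ᵥ (a + b)) ≤ Real.sqrt (a ⬝ᵥ a) + Real.sqrt (b ⬝ᵥ b) := by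
  rw [sqrt_dot_eq_norm, sqrt_dot_eq_norm, sqrt_dot_eq_norm]
  exact norm_add_le _ _

lemma sqrt_dot_smul {ι : Type*} [Fintype ι] (c : ℝ) (x : ι → ℝ) :
    Real.sqrt ((c • x) ⬝ᵥ (c • x)) = |c| * Real.sqrt (x ⬝ᵥ x) := by
  rw [smul_dotProduct, dotProduct_smul, smul_eq_mul, smul_eq_mul, ← mul_assoc, ← sq,
    Real.sqrt_mul (sq_nonneg c), Real.sqrt_sq_eq_abs]

/-- If the distance from z = (1/√2)(uᵀ,vᵀ)ᵀ to the subspace E is at most ε < 1,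
then E contains a unit vector w with ‖Bw − σw‖ ≤ (ε/√(1−ε²))(σ + ‖A‖). -/
theorem approximate_eigenvector_in_subspace (M N : ℕ)
    (A : Matrix (Fin M) (Fin N) ℝ)
    (σ : ℝ) (hσ : 0 ≤ σ) (u : Fin M → ℝ) (v : Fin N → ℝ)
    (hu : u ⬝ᵥ u = 1) (hv : v ⬝ᵥ v = 1)
    (hAv : A.mulVec v = σ • u) (hATu : Aᵀ.mulVec u = σ • v)
    (normA : ℝ) (hnA : 0 ≤ normA)
    (hop : ∀ x : Fin M ⊕ Fin N → ℝ,
      Real.sqrt ((fromBlocks 0 A Aᵀ 0).mulVec x ⬝ᵥ (fromBlocks 0 A Aᵀ 0).mulVec x)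
        ≤ normA * Real.sqrt (x ⬝ᵥ x))
    (E : Submodule ℝ (Fin M ⊕ Fin N → ℝ)) (ε : ℝ) (hε : ε < 1)
    (hdist : ∃ y ∈ E,
      Real.sqrt (((Real.sqrt 2)⁻¹ • Sum.elim u v - y) ⬝ᵥ
        ((Real.sqrt 2)⁻¹ • Sum.elim u v - y)) ≤ ε) :
    ∃ w ∈ E, w ⬝ᵥ w = 1 ∧
      Real.sqrt (((fromBlocks 0 A Aᵀ 0).mulVec w - σ • w) ⬝ᵥ
          ((fromBlocks 0 A Aᵀ 0).mulVec w - σ • w)) ≤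
        ε / Real.sqrt (1 - ε ^ 2) * (σ + normA) := by
  obtain ⟨y, hyE, hy⟩ := hdist
  set B := fromBlocks 0 A Aᵀ 0 with hB
  set z : Fin M ⊕ Fin N → ℝ := (Real.sqrt 2)⁻¹ • Sum.elim u v with hzdef
  -- basic facts about z
  have h2 : (0:ℝ) < Real.sqrt 2 := Real.sqrt_pos.mpr (by norm_num)
  have hzz : z ⬝ᵥ z = 1 := by
    rw [hzdef, smul_dotProduct, dotProduct_smul, sumElim_dotProduct_sumElim, hu, hv,
      smul_eq_mul, smul_eq_mul, ← mul_assoc, ← mul_inv,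
      Real.mul_self_sqrt (by norm_num : (0:ℝ) ≤ 2)]
    norm_num
  have hAz : B.mulVec z = σ • z := by
    rw [hzdef, hB, mulVec_smul, fromBlocks_mulVec]
    have hl : Sum.elim u v ∘ Sum.inl = u := rfl
    have hr : Sum.elim u v ∘ Sum.inr = v := rfl
    simp only [zero_mulVec, zero_add, add_zero, hl, hr, hAv, hATu]
    have : Sum.elim (σ • u) (σ • v) = σ • Sum.elim u v := by
      funext i; cases i <;> rfl
    rw [this, smul_comm]
  clear_value z B
  -- ε ≥ 0
  have hε0 : 0 ≤ ε := le_trans (Real.sqrt_nonneg _) hy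
  have hε2 : (0:ℝ) < 1 - ε ^ 2 := by nlinarith
  -- dot product abbreviations
  set q := y ⬝ᵥ y with hq
  set d := y ⬝ᵥ z with hd
  have hqnn : 0 ≤ q := sqrt_dot_nonneg' y
  -- expansion of ‖z - y‖²
  have hexp : (z - y) ⬝ᵥ (z - y) = 1 - 2 * d + q := by
    rw [sub_dotProduct, dotProduct_sub, dotProduct_sub, hzz, dotProduct_comm z y]
    ring
  have hybd : 1 - 2 * d + q ≤ ε ^ 2 := by
    have h1 : (z - y) ⬝ᵥ (z - y) ≤ ε ^ 2 := by
      nlinarith [Real.sq_sqrt (sqrt_dot_nonneg' (z - y)), Real.sqrt_nonneg ((z-y) ⬝ᵥ (z-y)), hy, hε0]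
    linarith [hexp ▸ h1]
  -- q > 0
  have hqpos : 0 < q := by
    rcases eq_or_lt_of_le hqnn with h | h
    · exfalso
      have hy0 : y = 0 := dotProduct_self_eq_zero.mp h.symm
      have hd0 : d = 0 := by rw [hd, hy0, zero_dotProduct]
      nlinarith
    · exact h
  -- d² ≥ q (1 - ε²)
  have hd2 : q * (1 - ε ^ 2) ≤ d ^ 2 := by
    nlinarith [sq_nonneg (2 * d - q - (1 - ε ^ 2)), sq_nonneg (q - (1 - ε ^ 2)),
      mul_nonneg (show (0:ℝ) ≤ 2 * d - q - (1 - ε ^ 2) by linarith)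
        (show (0:ℝ) ≤ q + (1 - ε ^ 2) by linarith)]
  have hdpos : 0 < d := by linarith
  -- the candidate vector
  set w : Fin M ⊕ Fin N → ℝ := (Real.sqrt q)⁻¹ • y with hw
  have hsq : Real.sqrt q > 0 := Real.sqrt_pos.mpr hqpos
  refine ⟨w, E.smul_mem _ hyE, ?_, ?_⟩
  · rw [hw, smul_dotProduct, dotProduct_smul, smul_eq_mul, smul_eq_mul, ← hq, ← mul_assoc,
      ← sq, inv_pow, Real.sq_sqrt hqnn]
    field_simp
  · -- the residual
    set p : Fin M ⊕ Fin N → ℝ := y - d • z with hp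
    have hres : B.mulVec w - σ • w = (Real.sqrt q)⁻¹ • (B.mulVec p - σ • p) := by
      rw [hp, hw, mulVec_smul, mulVec_sub, mulVec_smul, hAz, smul_sub, smul_sub, smul_sub]
      module
    have hppnn : 0 ≤ p ⬝ᵥ p := sqrt_dot_nonneg' p
    have hpp : p ⬝ᵥ p = q - d ^ 2 := by
      rw [hp, sub_dotProduct, dotProduct_sub, dotProduct_sub, dotProduct_smul, smul_dotProduct,
        smul_dotProduct, dotProduct_smul, hzz, dotProduct_comm z y]
      simp only [smul_eq_mul, ← hd, ← hq]
      ring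
    -- ‖p‖ ≤ ε √q
    have hpbd : Real.sqrt (p ⬝ᵥ p) ≤ ε * Real.sqrt q := by
      have h1 : p ⬝ᵥ p ≤ ε ^ 2 * q := by rw [hpp]; nlinarith
      calc Real.sqrt (p ⬝ᵥ p) ≤ Real.sqrt (ε ^ 2 * q) := Real.sqrt_le_sqrt h1
        _ = ε * Real.sqrt q := by
            rw [Real.sqrt_mul (sq_nonneg ε), Real.sqrt_sq hε0]
    -- assemble
    rw [hres, sqrt_dot_smul]
    have habs : |(Real.sqrt q)⁻¹| = (Real.sqrt q)⁻¹ := abs_of_pos (by positivity)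
    rw [habs]
    have htri : Real.sqrt ((B.mulVec p - σ • p) ⬝ᵥ (B.mulVec p - σ • p)) ≤
        normA * Real.sqrt (p ⬝ᵥ p) + σ * Real.sqrt (p ⬝ᵥ p) := by
      have := sqrt_dot_triangle (B.mulVec p) (-(σ • p))
      rw [sub_eq_add_neg]
      refine le_trans this ?_
      have hneg : Real.sqrt ((-(σ • p)) ⬝ᵥ (-(σ • p))) = σ * Real.sqrt (p ⬝ᵥ p) := by
        rw [show -(σ • p) = (-σ) • p by simp, sqrt_dot_smul, abs_neg, abs_of_nonneg hσ]
      rw [hneg]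
      exact add_le_add_left (hop p) _
    have hfinal : (Real.sqrt q)⁻¹ *
        Real.sqrt ((B.mulVec p - σ • p) ⬝ᵥ (B.mulVec p - σ • p)) ≤ ε * (σ + normA) := by
      calc (Real.sqrt q)⁻¹ * Real.sqrt ((B.mulVec p - σ • p) ⬝ᵥ (B.mulVec p - σ • p))
          ≤ (Real.sqrt q)⁻¹ * ((normA + σ) * Real.sqrt (p ⬝ᵥ p)) := by
            refine mul_le_mul_of_nonneg_left ?_ (by positivity)
            linarith [htri]
        _ ≤ (Real.sqrt q)⁻¹ * ((normA + σ) * (ε * Real.sqrt q)) := by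
            refine mul_le_mul_of_nonneg_left ?_ (by positivity)
            exact mul_le_mul_of_nonneg_left hpbd (by positivity)
        _ = ε * (σ + normA) := by field_simp; ring
    refine le_trans hfinal ?_
    have hsqrt1 : Real.sqrt (1 - ε ^ 2) ≤ 1 := by
      have := Real.sqrt_le_sqrt (show 1 - ε ^ 2 ≤ 1 by nlinarith)
      simpa using this
    have hsp : 0 < Real.sqrt (1 - ε ^ 2) := Real.sqrt_pos.mpr hε2
    have hle : ε ≤ ε / Real.sqrt (1 - ε ^ 2) := by
      rw [le_div_iff₀ hsp]
      have := mul_le_mul_of_nonneg_left hsqrt1 hε0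
      linarith
    have := mul_le_mul_of_nonneg_right hle (show (0:ℝ) ≤ σ + normA by linarith)
    linarith
end

section
/- With the Lanczos bidiagonalization relations AQ_m = P_m B_m and Aᵀ P_m = Q_m B_mᵀ + β_m q_{m+1} e_mᵀ and Ã = [[0, A],[Aᵀ, 0]], W = [[P_m, 0],[0, Q_m]], the matrix C̃ := Wᵀ(Ã − τI)²W equals [[τ²I + B_m B_mᵀ + β_m² e_m e_mᵀ, −2τ B_m],[−2τ B_mᵀ, τ²I + B_mᵀ B_m]]. -/
open Matrix

section helpers
variable {k l n o : Type*} [Fintype l] [Fintype n]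

lemma mul_vmv (Mx : Matrix k l ℝ) (u : l → ℝ) (v : o → ℝ) :
    Mx * vecMulVec u v = vecMulVec (Mx.mulVec u) v := by
  ext i j
  simp [mul_apply, vecMulVec_apply, mulVec, dotProduct, Finset.sum_mul, mul_assoc]

lemma vmv_mul (u : k → ℝ) (v : n → ℝ) (Mx : Matrix n o ℝ) :
    vecMulVec u v * Mx = vecMulVec u (v ᵥ* Mx) := by
  ext i j
  simp [mul_apply, vecMulVec_apply, vecMul, dotProduct, Finset.mul_sum, mul_assoc]

lemma vmv_vmv (u : k → ℝ) (v : n → ℝ) (w : n → ℝ) (x : o → ℝ) :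
    vecMulVec u v * vecMulVec w x = (v ⬝ᵥ w) • vecMulVec u x := by
  ext i j
  simp [mul_apply, vecMulVec_apply, dotProduct, Finset.sum_mul, Finset.mul_sum]
  apply Finset.sum_congr rfl
  intros; ring

lemma vmv_transpose (u : k → ℝ) (v : o → ℝ) :
    (vecMulVec u v)ᵀ = vecMulVec v u := by
  ext i j; simp [vecMulVec_apply, mul_comm]

lemma vmv_zero_left (v : o → ℝ) : vecMulVec (0 : k → ℝ) v = 0 := by
  ext i j; simp [vecMulVec_apply]

lemma vmv_zero_right (u : k → ℝ) : vecMulVec u (0 : o → ℝ) = 0 := by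
  ext i j; simp [vecMulVec_apply]

end helpers

/-- With W = diag(P_m, Q_m), the matrix C̃ = Wᵀ(Ã − τI)²W equals
[[τ²I + B_mB_mᵀ + β_m² e_m e_mᵀ, −2τ B_m],[−2τ B_mᵀ, τ²I + B_mᵀB_m]]. -/
theorem harmonic_C_matrix (M N m : ℕ) (A : Matrix (Fin M) (Fin N) ℝ)
    (P : Matrix (Fin M) (Fin (m+1)) ℝ) (Q : Matrix (Fin N) (Fin (m+1)) ℝ)
    (B : Matrix (Fin (m+1)) (Fin (m+1)) ℝ) (β τ : ℝ) (q : Fin N → ℝ)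
    (hP : Pᵀ * P = 1) (hQ : Qᵀ * Q = 1)
    (hq : q ⬝ᵥ q = 1) (hqQ : Qᵀ.mulVec q = 0)
    (h1 : A * Q = P * B)
    (h2 : Aᵀ * P = Q * Bᵀ + β • vecMulVec q (Pi.single (Fin.last m) 1)) :
    (fromBlocks P 0 0 Q)ᵀ *
        (((fromBlocks 0 A Aᵀ 0) - τ • 1) * ((fromBlocks 0 A Aᵀ 0) - τ • 1)) *
        (fromBlocks P 0 0 Q) =
      fromBlocks
        (τ ^ 2 • 1 + B * Bᵀ + β ^ 2 • vecMulVec (Pi.single (Fin.last m) 1)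
          (Pi.single (Fin.last m) (1 : ℝ)))
        ((-(2 * τ)) • B)
        ((-(2 * τ)) • Bᵀ)
        (τ ^ 2 • 1 + Bᵀ * B) := by
  set e : Fin (m+1) → ℝ := Pi.single (Fin.last m) 1 with he
  have hQq : q ᵥ* Q = 0 := by rw [← Matrix.mulVec_transpose]; exact hqQ
  have hPAQ : Pᵀ * (A * Q) = B := by rw [h1, ← Matrix.mul_assoc, hP, Matrix.one_mul]
  have hQAP : Qᵀ * (Aᵀ * P) = Bᵀ := by
    rw [h2, Matrix.mul_add, ← Matrix.mul_assoc, hQ, Matrix.one_mul, Matrix.mul_smul,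
      mul_vmv, hqQ, vmv_zero_left, smul_zero, add_zero]
  have hPA : Pᵀ * A = B * Qᵀ + β • vecMulVec e q := by
    have h3 := congrArg Matrix.transpose h2
    simp only [Matrix.transpose_mul, Matrix.transpose_transpose, Matrix.transpose_add,
      Matrix.transpose_smul, vmv_transpose] at h3
    exact h3
  have hQAAQ : Qᵀ * (Aᵀ * (A * Q)) = Bᵀ * B := by
    rw [h1, ← Matrix.mul_assoc Aᵀ P B, ← Matrix.mul_assoc Qᵀ (Aᵀ * P) B, hQAP]
  have hPAAP : Pᵀ * (A * (Aᵀ * P)) = B * Bᵀ + (β ^ 2) • vecMulVec e e := by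
    rw [← Matrix.mul_assoc, hPA, h2, Matrix.add_mul, Matrix.mul_add, Matrix.mul_add,
      Matrix.smul_mul, Matrix.smul_mul, Matrix.mul_smul, Matrix.mul_smul,
      Matrix.mul_assoc B Qᵀ (Q * Bᵀ), ← Matrix.mul_assoc Qᵀ Q Bᵀ, hQ, Matrix.one_mul,
      mul_vmv, ← Matrix.mulVec_mulVec, hqQ, Matrix.mulVec_zero, vmv_zero_left,
      vmv_mul, ← Matrix.vecMul_vecMul, hQq, Matrix.zero_vecMul, vmv_zero_right,
      vmv_vmv, hq]
    simp [smul_smul]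
    ring_nf
  have hX : (fromBlocks 0 A Aᵀ 0 : Matrix (Fin M ⊕ Fin N) (Fin M ⊕ Fin N) ℝ) - τ • 1
      = fromBlocks ((-τ) • (1 : Matrix (Fin M) (Fin M) ℝ)) A Aᵀ ((-τ) • (1 : Matrix (Fin N) (Fin N) ℝ)) := by
    rw [sub_eq_add_neg, ← Matrix.fromBlocks_one, Matrix.fromBlocks_smul, Matrix.fromBlocks_neg,
      Matrix.fromBlocks_add]
    simp
  rw [hX, Matrix.fromBlocks_transpose, Matrix.transpose_zero, Matrix.fromBlocks_multiply,
    Matrix.fromBlocks_multiply, Matrix.fromBlocks_multiply]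
  rw [Matrix.fromBlocks_inj]
  refine ⟨?_, ?_, ?_, ?_⟩ 
  · simp only [Matrix.mul_zero, Matrix.zero_mul, add_zero, zero_add, Matrix.transpose_zero,
      Matrix.smul_mul, Matrix.mul_smul, Matrix.one_mul, Matrix.mul_one, smul_smul,
      Matrix.mul_add, Matrix.add_mul, Matrix.mul_assoc]
    rw [hP, hPAAP]
    module
  · simp only [Matrix.mul_zero, Matrix.zero_mul, add_zero, zero_add, Matrix.transpose_zero,
      Matrix.smul_mul, Matrix.mul_smul, Matrix.one_mul, Matrix.mul_one, smul_smul,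
      Matrix.mul_add, Matrix.add_mul, Matrix.mul_assoc]
    rw [hPAQ]
    module
  · simp only [Matrix.mul_zero, Matrix.zero_mul, add_zero, zero_add, Matrix.transpose_zero,
      Matrix.smul_mul, Matrix.mul_smul, Matrix.one_mul, Matrix.mul_one, smul_smul,
      Matrix.mul_add, Matrix.add_mul, Matrix.mul_assoc]
    rw [hQAP]
    module
  · simp only [Matrix.mul_zero, Matrix.zero_mul, add_zero, zero_add, Matrix.transpose_zero,
      Matrix.smul_mul, Matrix.mul_smul, Matrix.one_mul, Matrix.mul_one, smul_smul,
      Matrix.mul_add, Matrix.add_mul, Matrix.mul_assoc]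
    rw [hQ, hQAAQ]
    module
end
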